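/- For every B ∈ (0,1) and every x ∈ (-B,1), the function U satisfies (LU)(x) = -c₁(1-x)/2, where (Lf)(x) = (μ²/2)·(1-x²)²·f''(x). -/

import Mathlib

noncomputable section

/-- The function `U₁(x) = (c₁(1-x)/(4μ²))·(ln((1+x)/(1-x)) + 2/(1-B²))`. -/
def U₁ (μ c₁ B x : ℝ) : ℝ :=
  c₁ * (1 - x) / (4 * μ ^ 2) * (Real.log ((1 + x) / (1 - x)) + 2 / (1 - B ^ 2))

/-- The function `U` of the switching problem: `U(x) = U₁(x)` for `x ∈ (-B, 1]` and
`U(x) = U₁(-x) + c₂` for `x ∈ (-1, -B]`. -/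
def Ufun (μ c₁ c₂ B x : ℝ) : ℝ :=
  if -B < x then U₁ μ c₁ B x else U₁ μ c₁ B (-x) + c₂

/-- For every `B ∈ (0,1)` and every `x ∈ (-B,1)`, the function `U`
satisfies `(LU)(x) = -c₁(1-x)/2`, where `(Lf)(x) = (μ²/2)(1-x²)² f''(x)`. -/
theorem LU_on_continuation (μ c₀ c₁ c₂ : ℝ) (hμ : 0 < μ) (hc₀ : 0 < c₀) (hc₁ : 0 < c₁)
    (hc₂ : 0 < c₂) (B : ℝ) (hB : B ∈ Set.Ioo (0 : ℝ) 1) :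
    ∀ x ∈ Set.Ioo (-B) (1 : ℝ),
      (DifferentiableAt ℝ (Ufun μ c₁ c₂ B) x
        ∧ DifferentiableAt ℝ (deriv (Ufun μ c₁ c₂ B)) x) ∧
      μ ^ 2 / 2 * (1 - x ^ 2) ^ 2 * deriv (deriv (Ufun μ c₁ c₂ B)) x
        = -(c₁ * (1 - x)) / 2 := by
  obtain ⟨hB0, hB1⟩ := hB
  have hμ0 : μ ≠ 0 := ne_of_gt hμ
  set K : ℝ := 2 / (1 - B ^ 2) with hK
  set S : Set ℝ := Set.Ioo (-B) (1 : ℝ) with hSdef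
  have hSopen : IsOpen S := isOpen_Ioo
  have hbound : ∀ y ∈ S, 0 < 1 + y ∧ 0 < 1 - y := by
    intro y hy
    exact ⟨by have := hy.1; linarith, by have := hy.2; linarith⟩
  set V : ℝ → ℝ := fun y =>
    c₁ * (1 - y) / (4 * μ ^ 2) * (Real.log (1 + y) - Real.log (1 - y) + K) with hVdef
  set V' : ℝ → ℝ := fun y =>
    (-c₁ / (4 * μ ^ 2)) * (Real.log (1 + y) - Real.log (1 - y) + K)
      + c₁ * (1 - y) / (4 * μ ^ 2) * ((1 + y)⁻¹ + (1 - y)⁻¹) with hV'def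
  -- U = V on S
  have hUV : Set.EqOn (Ufun μ c₁ c₂ B) V S := by
    intro y hy
    obtain ⟨h1, h2⟩ := hbound y hy
    simp only [Ufun, U₁, if_pos hy.1, hVdef]
    rw [Real.log_div (ne_of_gt h1) (ne_of_gt h2)]
  -- derivative of V
  have hVd : ∀ y ∈ S, HasDerivAt V (V' y) y := by
    intro y hy
    obtain ⟨h1, h2⟩ := hbound y hy
    have hlog1 : HasDerivAt (fun y : ℝ => Real.log (1 + y)) ((1 + y)⁻¹) y := by
      have := (Real.hasDerivAt_log (ne_of_gt h1)).comp y
        ((hasDerivAt_id y).const_add 1)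
      simpa [Function.comp_def] using this
    have hlog2 : HasDerivAt (fun y : ℝ => Real.log (1 - y)) (-(1 - y)⁻¹) y := by
      have := (Real.hasDerivAt_log (ne_of_gt h2)).comp y
        ((hasDerivAt_id y).neg.const_add 1)
      simpa [Function.comp_def] using this
    have hsum : HasDerivAt (fun y : ℝ => Real.log (1 + y) - Real.log (1 - y) + K)
        ((1 + y)⁻¹ + (1 - y)⁻¹) y := by
      have := (hlog1.sub hlog2).add_const K
      simpa [sub_neg_eq_add] using this
    have hlin : HasDerivAt (fun y : ℝ => c₁ * (1 - y) / (4 * μ ^ 2))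
        (-c₁ / (4 * μ ^ 2)) y := by
      have : HasDerivAt (fun y : ℝ => c₁ * (1 - y) / (4 * μ ^ 2))
          ((c₁ * (-1)) / (4 * μ ^ 2)) y := by
        exact ((((hasDerivAt_id y).neg.const_add 1).const_mul c₁).div_const (4 * μ ^ 2))
      convert this using 1
      ring
    have := hlin.mul hsum
    simpa [hV'def, Pi.mul_def] using this
  -- second derivative value
  set W : ℝ → ℝ := fun y =>
    (-c₁ / (4 * μ ^ 2)) * ((1 + y)⁻¹ + (1 - y)⁻¹)
      + ((-c₁ / (4 * μ ^ 2)) * ((1 + y)⁻¹ + (1 - y)⁻¹)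
        + c₁ * (1 - y) / (4 * μ ^ 2) * (-((1 + y) ^ 2)⁻¹ + ((1 - y) ^ 2)⁻¹)) with hWdef
  have hV'd : ∀ y ∈ S, HasDerivAt V' (W y) y := by
    intro y hy
    obtain ⟨h1, h2⟩ := hbound y hy
    have hlog1 : HasDerivAt (fun y : ℝ => Real.log (1 + y)) ((1 + y)⁻¹) y := by
      have := (Real.hasDerivAt_log (ne_of_gt h1)).comp y
        ((hasDerivAt_id y).const_add 1)
      simpa [Function.comp_def] using this
    have hlog2 : HasDerivAt (fun y : ℝ => Real.log (1 - y)) (-(1 - y)⁻¹) y := by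
      have := (Real.hasDerivAt_log (ne_of_gt h2)).comp y
        ((hasDerivAt_id y).neg.const_add 1)
      simpa [Function.comp_def] using this
    have hsum : HasDerivAt (fun y : ℝ => Real.log (1 + y) - Real.log (1 - y) + K)
        ((1 + y)⁻¹ + (1 - y)⁻¹) y := by
      have := (hlog1.sub hlog2).add_const K
      simpa [sub_neg_eq_add] using this
    have hlin : HasDerivAt (fun y : ℝ => c₁ * (1 - y) / (4 * μ ^ 2))
        (-c₁ / (4 * μ ^ 2)) y := by
      have : HasDerivAt (fun y : ℝ => c₁ * (1 - y) / (4 * μ ^ 2))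
          ((c₁ * (-1)) / (4 * μ ^ 2)) y := by
        exact ((((hasDerivAt_id y).neg.const_add 1).const_mul c₁).div_const (4 * μ ^ 2))
      convert this using 1
      ring
    have hinv1 : HasDerivAt (fun y : ℝ => (1 + y)⁻¹) (-((1 + y) ^ 2)⁻¹) y := by
      have := ((hasDerivAt_id y).const_add 1).inv (ne_of_gt h1)
      simpa [neg_div, one_div, Pi.inv_def] using this
    have hinv2 : HasDerivAt (fun y : ℝ => (1 - y)⁻¹) (((1 - y) ^ 2)⁻¹) y := by
      have := ((hasDerivAt_id y).neg.const_add 1).inv (ne_of_gt h2)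
      simpa [Pi.inv_def, ← sub_eq_add_neg] using this
    have := (hsum.const_mul (-c₁ / (4 * μ ^ 2))).add (hlin.mul (hinv1.add hinv2))
    simpa [hWdef, hV'def, Pi.add_def, Pi.mul_def] using this
  intro x hx
  obtain ⟨h1x, h2x⟩ := hbound x hx
  have hnx : S ∈ nhds x := hSopen.mem_nhds hx
  have hUVnhds : Ufun μ c₁ c₂ B =ᶠ[nhds x] V := Filter.eventuallyEq_of_mem hnx hUV
  have hU1 : HasDerivAt (Ufun μ c₁ c₂ B) (V' x) x :=
    (hVd x hx).congr_of_eventuallyEq hUVnhds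
  -- deriv Ufun = V' on S
  have hderivEq : Set.EqOn (deriv (Ufun μ c₁ c₂ B)) V' S := by
    intro y hy
    have h := (hVd y hy).congr_of_eventuallyEq
      (Filter.eventuallyEq_of_mem (hSopen.mem_nhds hy) hUV)
    exact h.deriv
  have hderivNhds : deriv (Ufun μ c₁ c₂ B) =ᶠ[nhds x] V' :=
    Filter.eventuallyEq_of_mem hnx hderivEq
  have hU2 : HasDerivAt (deriv (Ufun μ c₁ c₂ B)) (W x) x :=
    (hV'd x hx).congr_of_eventuallyEq hderivNhds
  refine ⟨⟨hU1.differentiableAt, hU2.differentiableAt⟩, ?_⟩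
  rw [hU2.deriv]
  have h1 : (1 + x) ≠ 0 := ne_of_gt h1x
  have h2 : (1 - x) ≠ 0 := ne_of_gt h2x
  simp only [hWdef]
  field_simp
  ring
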